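/- For every k ≥ 0, Broyden's 'bad' scheme satisfies r_{k+1} ≤ [κ τ_k + (1 + τ_k) M r_k/(2μ)] · r_k. -/

import Mathlib

open Matrix MeasureTheory

noncomputable def specNorm {n : ℕ} (A : Matrix (Fin n) (Fin n) ℝ) : ℝ :=
  ‖Matrix.toEuclideanCLM (𝕜 := ℝ) A‖

noncomputable def frobNorm {n : ℕ} (A : Matrix (Fin n) (Fin n) ℝ) : ℝ :=
  Real.sqrt (∑ i, ∑ j, (A i j) ^ 2)

noncomputable def vnorm {n : ℕ} (x : Fin n → ℝ) : ℝ :=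
  Real.sqrt (∑ i, (x i) ^ 2)

noncomputable def intJac {n : ℕ} (J : (Fin n → ℝ) → Matrix (Fin n) (Fin n) ℝ)
    (x u : Fin n → ℝ) : Matrix (Fin n) (Fin n) ℝ :=
  Matrix.of fun i j => ∫ t in (0:ℝ)..(1:ℝ), J (x + t • u) i j

lemma vnorm_eq {n : ℕ} (v : Fin n → ℝ) :
    vnorm v = ‖(WithLp.equiv 2 (Fin n → ℝ)).symm v‖ := by
  rw [vnorm, EuclideanSpace.norm_eq]
  congr 1; apply Finset.sum_congr rfl; intro i _
  rw [Real.norm_eq_abs, sq_abs]; rfl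

lemma vnorm_nonneg {n : ℕ} (v : Fin n → ℝ) : 0 ≤ vnorm v := Real.sqrt_nonneg _

lemma vnorm_mulVec_le {n : ℕ} (A : Matrix (Fin n) (Fin n) ℝ) (v : Fin n → ℝ) :
    vnorm (A *ᵥ v) ≤ specNorm A * vnorm v := by
  rw [vnorm_eq, vnorm_eq]
  calc ‖(WithLp.equiv 2 (Fin n → ℝ)).symm (A *ᵥ v)‖
      = ‖Matrix.toEuclideanCLM (𝕜 := ℝ) A ((WithLp.equiv 2 (Fin n → ℝ)).symm v)‖ := by
        rfl
    _ ≤ _ := (Matrix.toEuclideanCLM (𝕜 := ℝ) A).le_opNorm _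

lemma specNorm_mul_le {n : ℕ} (A B : Matrix (Fin n) (Fin n) ℝ) :
    specNorm (A * B) ≤ specNorm A * specNorm B := by
  unfold specNorm
  rw [_root_.map_mul]
  exact ContinuousLinearMap.opNorm_comp_le _ _

lemma specNorm_nonneg {n : ℕ} (A : Matrix (Fin n) (Fin n) ℝ) : 0 ≤ specNorm A :=
  norm_nonneg _

lemma specNorm_add_le {n : ℕ} (A B : Matrix (Fin n) (Fin n) ℝ) :
    specNorm (A + B) ≤ specNorm A + specNorm B := by
  unfold specNorm; rw [_root_.map_add]; exact norm_add_le _ _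

lemma frobNorm_nonneg {n : ℕ} (A : Matrix (Fin n) (Fin n) ℝ) : 0 ≤ frobNorm A :=
  Real.sqrt_nonneg _

lemma specNorm_le_frobNorm {n : ℕ} (A : Matrix (Fin n) (Fin n) ℝ) :
    specNorm A ≤ frobNorm A := by
  have key : ∀ v : Fin n → ℝ, vnorm (A *ᵥ v) ≤ frobNorm A * vnorm v := by
    intro v
    have h1 : ∑ i, (A *ᵥ v) i ^ 2 ≤ (∑ i, ∑ j, (A i j) ^ 2) * ∑ j, (v j) ^ 2 := by
      rw [Finset.sum_mul]
      apply Finset.sum_le_sum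
      intro i _
      exact Finset.sum_mul_sq_le_sq_mul_sq Finset.univ (fun j => A i j) v
    have := Real.sqrt_le_sqrt h1
    rw [Real.sqrt_mul (by positivity)] at this
    exact this
  apply ContinuousLinearMap.opNorm_le_bound _ (frobNorm_nonneg A)
  intro x
  have := key (WithLp.equiv 2 (Fin n → ℝ) x)
  rw [vnorm_eq, vnorm_eq] at this
  exact this

section helpers
variable {n : ℕ} (J : (Fin n → ℝ) → Matrix (Fin n) (Fin n) ℝ)
  (xs u : Fin n → ℝ)

lemma line_cont : Continuous (fun t : ℝ => xs + t • u) := by continuity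

lemma entry_cont (hJc : Continuous J) (i j : Fin n) : Continuous (fun t : ℝ => J (xs + t • u) i j) := by
  have : Continuous (fun A : Matrix (Fin n) (Fin n) ℝ => A i j) :=
    (continuous_apply j).comp (continuous_apply i)
  exact this.comp (hJc.comp (line_cont xs u))

lemma mulVec_apply_cont (hJc : Continuous J) (i : Fin n) :
    Continuous (fun t : ℝ => (J (xs + t • u) *ᵥ u) i) := by
  simp only [Matrix.mulVec, dotProduct]
  exact continuous_finset_sum _ fun j _ => (entry_cont J xs u hJc i j).mul continuous_const

lemma intJac_mulVec (hJc : Continuous J) (i : Fin n) :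
    (intJac J xs u *ᵥ u) i = ∫ t in (0:ℝ)..(1:ℝ), (J (xs + t • u) *ᵥ u) i := by
  simp only [Matrix.mulVec, dotProduct, intJac, Matrix.of_apply]
  calc ∑ j, (∫ t in (0:ℝ)..(1:ℝ), J (xs + t • u) i j) * u j
      = ∑ j, ∫ t in (0:ℝ)..(1:ℝ), J (xs + t • u) i j * u j := by
        refine Finset.sum_congr rfl fun j _ => ?_
        rw [intervalIntegral.integral_mul_const]
    _ = ∫ t in (0:ℝ)..(1:ℝ), ∑ j, J (xs + t • u) i j * u j := by
        rw [← intervalIntegral.integral_finset_sum]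
        intro j _
        exact ((entry_cont J xs u hJc i j).mul continuous_const).intervalIntegrable _ _

lemma ftc (F : (Fin n → ℝ) → (Fin n → ℝ))
    (hF : ∀ z, HasFDerivAt F (LinearMap.toContinuousLinearMap ((J z).mulVecLin)) z)
    (hJc : Continuous J) :
    F (xs + u) - F xs = intJac J xs u *ᵥ u := by
  have hline : ∀ t : ℝ, HasDerivAt (fun s : ℝ => xs + s • u) u t := by
    intro t
    simpa using ((hasDerivAt_id t).smul_const u).const_add xs
  have hderiv : ∀ t : ℝ, HasDerivAt (fun s : ℝ => F (xs + s • u)) (J (xs + t • u) *ᵥ u) t := by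
    intro t
    have := (hF (xs + t • u)).comp_hasDerivAt t (hline t)
    exact this
  funext i
  rw [Pi.sub_apply, intJac_mulVec J xs u hJc i]
  rw [intervalIntegral.integral_eq_sub_of_hasDerivAt
    (f := fun t : ℝ => F (xs + t • u) i) (fun t _ => (hasDerivAt_pi.1 (hderiv t)) i)
    ((mulVec_apply_cont J xs u hJc i).intervalIntegrable _ _)]
  norm_num

lemma vnorm_smul (c : ℝ) (v : Fin n → ℝ) : vnorm (c • v) = |c| * vnorm v := by
  rw [vnorm_eq, vnorm_eq, ← Real.norm_eq_abs, ← norm_smul]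
  congr 1

lemma vnorm_sub_le (a b : Fin n → ℝ) : vnorm (a - b) ≤ vnorm a + vnorm b := by
  rw [vnorm_eq, vnorm_eq, vnorm_eq]
  have : (WithLp.equiv 2 (Fin n → ℝ)).symm (a - b)
      = (WithLp.equiv 2 (Fin n → ℝ)).symm a - (WithLp.equiv 2 (Fin n → ℝ)).symm b := rfl
  rw [this]
  exact norm_sub_le _ _

lemma intJac_err_bound (hJc : Continuous J) (M : ℝ) (hM : 0 ≤ M)
    (hLip : ∀ z, specNorm (J z - J xs) ≤ M * vnorm (z - xs)) :
    vnorm ((intJac J xs u - J xs) *ᵥ u) ≤ M / 2 * vnorm u ^ 2 := by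
  set g : ℝ → EuclideanSpace ℝ (Fin n) :=
    fun t => (WithLp.equiv 2 (Fin n → ℝ)).symm ((J (xs + t • u) - J xs) *ᵥ u) with hg
  have hgcont : Continuous g := by
    apply Continuous.comp (PiLp.continuous_toLp 2 (fun _ : Fin n => ℝ))
    apply continuous_pi
    intro i
    simp only [Matrix.sub_mulVec, Pi.sub_apply]
    exact (mulVec_apply_cont J xs u hJc i).sub continuous_const
  have hgint : IntervalIntegrable g volume 0 1 := hgcont.intervalIntegrable _ _
  have hentry : ∀ i, ((intJac J xs u - J xs) *ᵥ u) i
      = ∫ t in (0:ℝ)..(1:ℝ), ((J (xs + t • u) - J xs) *ᵥ u) i := by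
    intro i
    rw [Matrix.sub_mulVec, Pi.sub_apply, intJac_mulVec J xs u hJc i]
    have hconst : (J xs *ᵥ u) i = ∫ _ in (0:ℝ)..(1:ℝ), (J xs *ᵥ u) i := by
      simp
    rw [hconst, ← intervalIntegral.integral_sub
      ((mulVec_apply_cont J xs u hJc i).intervalIntegrable _ _)
      (intervalIntegrable_const)]
    congr 1; funext t
    rw [Matrix.sub_mulVec, Pi.sub_apply]
  have hkey : (WithLp.equiv 2 (Fin n → ℝ)).symm ((intJac J xs u - J xs) *ᵥ u)
      = ∫ t in (0:ℝ)..(1:ℝ), g t := by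
    apply PiLp.ext
    intro i
    have h1 : (∫ t in (0:ℝ)..(1:ℝ), g t) i
        = EuclideanSpace.proj (𝕜 := ℝ) i (∫ t in (0:ℝ)..(1:ℝ), g t) := rfl
    rw [h1, ← ContinuousLinearMap.intervalIntegral_comp_comm _ hgint]
    exact hentry i
  have hnorm : vnorm ((intJac J xs u - J xs) *ᵥ u) = ‖∫ t in (0:ℝ)..(1:ℝ), g t‖ := by
    rw [vnorm_eq, hkey]
  rw [hnorm]
  have hb : ∀ t ∈ Set.Icc (0:ℝ) 1, ‖g t‖ ≤ (M * vnorm u ^ 2) * t := by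
    intro t ht
    have h2 : ‖g t‖ = vnorm ((J (xs + t • u) - J xs) *ᵥ u) := (vnorm_eq _).symm
    rw [h2]
    calc vnorm ((J (xs + t • u) - J xs) *ᵥ u)
        ≤ specNorm (J (xs + t • u) - J xs) * vnorm u := vnorm_mulVec_le _ _
      _ ≤ (M * vnorm (xs + t • u - xs)) * vnorm u := by
          exact mul_le_mul_of_nonneg_right (hLip _) (vnorm_nonneg u)
      _ = (M * vnorm u ^ 2) * t := by
          have : xs + t • u - xs = t • u := by abel
          rw [this, vnorm_smul, abs_of_nonneg ht.1]
          ring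
  calc ‖∫ t in (0:ℝ)..(1:ℝ), g t‖
      ≤ ∫ t in (0:ℝ)..(1:ℝ), ‖g t‖ :=
        intervalIntegral.norm_integral_le_integral_norm zero_le_one
    _ ≤ ∫ t in (0:ℝ)..(1:ℝ), (M * vnorm u ^ 2) * t := by
        apply intervalIntegral.integral_mono_on zero_le_one
          (hgcont.norm.intervalIntegrable _ _)
          ((continuous_const.mul continuous_id).intervalIntegrable _ _) hb
    _ = M / 2 * vnorm u ^ 2 := by
        rw [intervalIntegral.integral_const_mul, integral_id]
        ring

lemma vnorm_neg (v : Fin n → ℝ) : vnorm (-v) = vnorm v := by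
  simp [vnorm]

lemma vnorm_pos {v : Fin n → ℝ} (hv : v ≠ 0) : 0 < vnorm v := by
  rw [vnorm_eq]
  rw [norm_pos_iff]
  intro h
  exact hv ((WithLp.equiv 2 (Fin n → ℝ)).symm.injective (h.trans rfl))

end helpers

/-- For Broyden's "bad" scheme, for every `k`,
`r_{k+1} ≤ (κ τ_k + (1 + τ_k) M r_k/(2μ)) · r_k`. -/
theorem stmt12 {n : ℕ} (F : (Fin n → ℝ) → (Fin n → ℝ))
    (J : (Fin n → ℝ) → Matrix (Fin n) (Fin n) ℝ)
    (hF : ∀ z, HasFDerivAt F (LinearMap.toContinuousLinearMap ((J z).mulVecLin)) z)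
    (hJc : Continuous J)
    (xs : Fin n → ℝ) (hxs : F xs = 0) (hJs : IsUnit (J xs).det)
    (μ L κ : ℝ) (hμ : μ = 1 / specNorm ((J xs)⁻¹)) (hL : L = specNorm (J xs)) (hκ : κ = L / μ)
    (M : ℝ) (hM : 0 ≤ M)
    (hLip : ∀ z, specNorm (J z - J xs) ≤ M * vnorm (z - xs))
    (x : ℕ → Fin n → ℝ) (H : ℕ → Matrix (Fin n) (Fin n) ℝ)
    (hHk : ∀ k, IsUnit (H k).det) (hFk : ∀ k, F (x k) ≠ 0)
    (hyk : ∀ k, F (x (k + 1)) - F (x k) ≠ 0)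
    (hx : ∀ k, x (k + 1) = x k - H k *ᵥ F (x k))
    (hH : ∀ k, H (k + 1) = H k +
        ((F (x (k + 1)) - F (x k)) ⬝ᵥ (F (x (k + 1)) - F (x k)))⁻¹ •
          vecMulVec (x (k + 1) - x k - H k *ᵥ (F (x (k + 1)) - F (x k)))
            (F (x (k + 1)) - F (x k))) :
    ∀ k : ℕ, vnorm (x (k + 1) - xs) ≤
      (κ * frobNorm (J xs * (H k - (J xs)⁻¹))
          + (1 + frobNorm (J xs * (H k - (J xs)⁻¹))) * M * vnorm (x k - xs) / (2 * μ)) *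
        vnorm (x k - xs) := by
  intro k
  set u : Fin n → ℝ := x k - xs with hu
  set As : Matrix (Fin n) (Fin n) ℝ := J xs with hAs
  set Hk : Matrix (Fin n) (Fin n) ℝ := H k with hHkdef
  set G : Matrix (Fin n) (Fin n) ℝ := intJac J xs u with hG
  have hxk : x k = xs + u := by rw [hu]; abel
  have hFxk : F (x k) = G *ᵥ u := by
    have h := ftc J xs u F hF hJc
    rw [← hxk, hxs, sub_zero] at h
    exact h
  have hune : u ≠ 0 := by
    intro h
    exact hFk k (by rw [hFxk, h, Matrix.mulVec_zero])
  have hrpos : 0 < vnorm u := vnorm_pos hune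
  have hinv : As⁻¹ * As = 1 := Matrix.nonsing_inv_mul As hJs
  have hspos : 0 < specNorm As⁻¹ := by
    rcases lt_or_eq_of_le (specNorm_nonneg As⁻¹) with h | h
    · exact h
    · exfalso
      have h1 : vnorm ((As⁻¹ * As) *ᵥ u) ≤ specNorm (As⁻¹ * As) * vnorm u :=
        vnorm_mulVec_le _ _
      have h2 : specNorm (As⁻¹ * As) ≤ specNorm As⁻¹ * specNorm As := specNorm_mul_le _ _
      rw [hinv, Matrix.one_mulVec] at h1
      rw [hinv, ← h, zero_mul] at h2
      nlinarith [specNorm_nonneg (1 : Matrix (Fin n) (Fin n) ℝ)]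
  have hτ0 : 0 ≤ frobNorm (As * (Hk - As⁻¹)) := frobNorm_nonneg _
  have hL0 : 0 ≤ specNorm As := specNorm_nonneg _
  have hdiff : x (k + 1) - xs = -(((Hk - As⁻¹) * As) *ᵥ u) - Hk *ᵥ ((G - As) *ᵥ u) := by
    rw [hx k, hFxk]
    have e1 : ((Hk - As⁻¹) * As) = Hk * As - 1 := by
      rw [Matrix.sub_mul, hinv]
    rw [e1]
    simp only [Matrix.sub_mulVec, Matrix.one_mulVec, Matrix.mulVec_sub,
      ← Matrix.mulVec_mulVec]
    rw [hu]
    abel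
  have hD : specNorm (Hk - As⁻¹) ≤ specNorm As⁻¹ * frobNorm (As * (Hk - As⁻¹)) := by
    have e : Hk - As⁻¹ = As⁻¹ * (As * (Hk - As⁻¹)) := by
      rw [← mul_assoc, hinv, one_mul]
    calc specNorm (Hk - As⁻¹) = specNorm (As⁻¹ * (As * (Hk - As⁻¹))) := by rw [← e]
      _ ≤ specNorm As⁻¹ * specNorm (As * (Hk - As⁻¹)) := specNorm_mul_le _ _
      _ ≤ specNorm As⁻¹ * frobNorm (As * (Hk - As⁻¹)) :=
          mul_le_mul_of_nonneg_left (specNorm_le_frobNorm _) hspos.le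
  have hT1 : vnorm (((Hk - As⁻¹) * As) *ᵥ u)
      ≤ specNorm As⁻¹ * frobNorm (As * (Hk - As⁻¹)) * specNorm As * vnorm u := by
    calc vnorm (((Hk - As⁻¹) * As) *ᵥ u)
        ≤ specNorm ((Hk - As⁻¹) * As) * vnorm u := vnorm_mulVec_le _ _
      _ ≤ (specNorm (Hk - As⁻¹) * specNorm As) * vnorm u :=
          mul_le_mul_of_nonneg_right (specNorm_mul_le _ _) hrpos.le
      _ ≤ specNorm As⁻¹ * frobNorm (As * (Hk - As⁻¹)) * specNorm As * vnorm u :=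
          mul_le_mul_of_nonneg_right (mul_le_mul_of_nonneg_right hD hL0) hrpos.le
  have hHkb : specNorm Hk
      ≤ specNorm As⁻¹ + specNorm As⁻¹ * frobNorm (As * (Hk - As⁻¹)) := by
    have e : Hk = As⁻¹ + (Hk - As⁻¹) := by abel
    calc specNorm Hk = specNorm (As⁻¹ + (Hk - As⁻¹)) := by rw [← e]
      _ ≤ specNorm As⁻¹ + specNorm (Hk - As⁻¹) := specNorm_add_le _ _
      _ ≤ _ := by linarith
  have herr : vnorm ((G - As) *ᵥ u) ≤ M / 2 * vnorm u ^ 2 :=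
    intJac_err_bound J xs u hJc M hM hLip
  have hT2 : vnorm (Hk *ᵥ ((G - As) *ᵥ u))
      ≤ (specNorm As⁻¹ + specNorm As⁻¹ * frobNorm (As * (Hk - As⁻¹)))
        * (M / 2 * vnorm u ^ 2) := by
    calc vnorm (Hk *ᵥ ((G - As) *ᵥ u))
        ≤ specNorm Hk * vnorm ((G - As) *ᵥ u) := vnorm_mulVec_le _ _
      _ ≤ _ := by
          apply mul_le_mul hHkb herr (vnorm_nonneg _)
          nlinarith
  have htri : vnorm (x (k + 1) - xs)
      ≤ vnorm (((Hk - As⁻¹) * As) *ᵥ u) + vnorm (Hk *ᵥ ((G - As) *ᵥ u)) := by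
    rw [hdiff]
    calc vnorm (-(((Hk - As⁻¹) * As) *ᵥ u) - Hk *ᵥ ((G - As) *ᵥ u))
        ≤ vnorm (-(((Hk - As⁻¹) * As) *ᵥ u)) + vnorm (Hk *ᵥ ((G - As) *ᵥ u)) :=
          vnorm_sub_le _ _
      _ = _ := by rw [vnorm_neg]
  have hfinal : (κ * frobNorm (As * (Hk - As⁻¹))
        + (1 + frobNorm (As * (Hk - As⁻¹))) * M * vnorm u / (2 * μ)) * vnorm u
      = specNorm As⁻¹ * frobNorm (As * (Hk - As⁻¹)) * specNorm As * vnorm u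
        + (specNorm As⁻¹ + specNorm As⁻¹ * frobNorm (As * (Hk - As⁻¹)))
          * (M / 2 * vnorm u ^ 2) := by
    rw [hκ, hμ, hL]
    have hne : specNorm As⁻¹ ≠ 0 := hspos.ne'
    field_simp
  rw [hfinal]
  linarith
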